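/- In the free associative algebra, the full skew-symmetrization of the iterated commutator x^{[m]} (where x^{[1]} = x, x^{[i+1]} = [x^{[i]}, x], evaluated by substituting distinct variables x₁,…,x_m in all orders with signs) equals zero for m ≥ 3. Concretely: Σ_{σ ∈ S_m} sgn(σ) [[…[[x_{σ(1)}, x_{σ(2)}], x_{σ(3)}], …], x_{σ(m)}] = 0 in any associative algebra, for m ≥ 3. -/

import Mathlib

/-- Left-normed iterated commutator: `leftComm a [b, c, …] = [[…[a,b],c],…]`. -/
def leftComm {R : Type*} [Ring R] : R → List R → R
  | a, [] => a
  | a, b :: l => leftComm (a * b - b * a) l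

section Aux

open Equiv Equiv.Perm Finset

variable {R : Type*} [Ring R]

lemma leftComm_concat (a b : R) (l : List R) :
    leftComm a (l.concat b) = leftComm a l * b - b * leftComm a l := by
  induction l generalizing a with
  | nil => rfl
  | cons c l ih => simpa [leftComm] using ih (a*c - c*a)

def skewSum (n : ℕ) (x : Fin (n+1) → R) : R :=
  ∑ σ : Perm (Fin (n+1)), (Perm.sign σ : ℤ) •
    leftComm (x (σ 0)) (List.ofFn fun i : Fin n => x (σ i.succ))

def peelEquiv (n : ℕ) : (Fin (n+2) × Perm (Fin (n+1))) ≃ Perm (Fin (n+2)) :=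
  ((Equiv.refl _).prodCongr (Equiv.mulRight Fin.revPerm)).trans
    (Equiv.Perm.decomposeFin.symm.trans (Equiv.mulRight Fin.revPerm))

lemma peelEquiv_apply (n : ℕ) (p : Fin (n+2)) (e : Perm (Fin (n+1))) :
    peelEquiv n (p, e) = decomposeFin.symm (p, e * Fin.revPerm) * Fin.revPerm := rfl

lemma pe_zero (n : ℕ) (p : Fin (n+2)) (e : Perm (Fin (n+1))) :
    peelEquiv n (p, e) 0 = Equiv.swap 0 p ((e 0).succ) := by
  rw [peelEquiv_apply, Perm.mul_apply]
  have h1 : (Fin.revPerm (0 : Fin (n+2))) = (Fin.last n).succ := by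
    simp [Fin.rev_zero, Fin.succ_last]
  rw [h1, decomposeFin_symm_apply_succ, Perm.mul_apply]
  simp [Fin.rev_last]

lemma pe_last (n : ℕ) (p : Fin (n+2)) (e : Perm (Fin (n+1))) :
    peelEquiv n (p, e) ((Fin.last n).succ) = p := by
  rw [peelEquiv_apply, Perm.mul_apply]
  have h1 : (Fin.revPerm ((Fin.last n).succ : Fin (n+2))) = 0 := by
    simp [Fin.succ_last, Fin.rev_last]
  rw [h1, decomposeFin_symm_apply_zero]

lemma pe_mid (n : ℕ) (p : Fin (n+2)) (e : Perm (Fin (n+1))) (j : Fin n) :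
    peelEquiv n (p, e) ((j.castSucc).succ) = Equiv.swap 0 p ((e j.succ).succ) := by
  rw [peelEquiv_apply, Perm.mul_apply]
  have h1 : (Fin.revPerm ((j.castSucc).succ : Fin (n+2))) = ((j.rev.castSucc).succ) := by
    simp [Fin.rev_succ, Fin.rev_castSucc, Fin.succ_castSucc, -Fin.castSucc_succ]
  rw [h1, decomposeFin_symm_apply_succ, Perm.mul_apply]
  simp [Fin.rev_castSucc, Fin.rev_rev]

lemma skewSum_peel (n : ℕ) (x : Fin (n+2) → R) :
    skewSum (n+1) x = ∑ p : Fin (n+2),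
      ((if p = 0 then (1:ℤ) else -1) * (Perm.sign (Fin.revPerm : Perm (Fin (n+1))) : ℤ)
        * (Perm.sign (Fin.revPerm : Perm (Fin (n+2))) : ℤ)) •
      (skewSum n (fun q => x (Equiv.swap 0 p q.succ)) * x p
        - x p * skewSum n (fun q => x (Equiv.swap 0 p q.succ))) := by
  rw [skewSum, ← Equiv.sum_comp (peelEquiv n), Fintype.sum_prod_type]
  refine Finset.sum_congr rfl fun p _ => ?_
  have hterm : ∀ e : Perm (Fin (n+1)),
      (Perm.sign (peelEquiv n (p, e)) : ℤ) •
        leftComm (x (peelEquiv n (p, e) 0))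
          (List.ofFn fun i : Fin (n+1) => x (peelEquiv n (p, e) i.succ)) =
      ((if p = 0 then (1:ℤ) else -1) * (Perm.sign (Fin.revPerm : Perm (Fin (n+1))) : ℤ)
        * (Perm.sign (Fin.revPerm : Perm (Fin (n+2))) : ℤ)) •
      ((Perm.sign e : ℤ) •
        (leftComm (x (Equiv.swap 0 p ((e 0).succ)))
            (List.ofFn fun j : Fin n => x (Equiv.swap 0 p ((e j.succ).succ))) * x p
          - x p * leftComm (x (Equiv.swap 0 p ((e 0).succ)))
            (List.ofFn fun j : Fin n => x (Equiv.swap 0 p ((e j.succ).succ))))) := by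
    intro e
    have hsign : Perm.sign (peelEquiv n (p, e)) =
        ((if p = 0 then 1 else -1) * Perm.sign (Fin.revPerm : Perm (Fin (n+1)))
          * Perm.sign (Fin.revPerm : Perm (Fin (n+2)))) * Perm.sign e := by
      rw [peelEquiv_apply, Perm.sign_mul, decomposeFin.symm_sign, Perm.sign_mul]
      simp [mul_comm, mul_assoc, mul_left_comm]
    have hlist : (List.ofFn fun i : Fin (n+1) => x (peelEquiv n (p, e) i.succ)) =
        (List.ofFn fun j : Fin n => x (Equiv.swap 0 p ((e j.succ).succ))).concat (x p) := by
      have h2 : ∀ j : Fin n, x (peelEquiv n (p, e) ((j.castSucc).succ)) =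
          x (Equiv.swap 0 p ((e j.succ).succ)) := fun j => by rw [pe_mid]
      rw [List.ofFn_succ', pe_last]
      simp only [h2]
    rw [hsign, hlist, leftComm_concat, pe_zero]
    push_cast [apply_ite (fun u : ℤˣ => (u : ℤ))]
    rw [mul_smul]
  calc ∑ e : Perm (Fin (n+1)),
      (Perm.sign (peelEquiv n (p, e)) : ℤ) •
        leftComm (x (peelEquiv n (p, e) 0))
          (List.ofFn fun i : Fin (n+1) => x (peelEquiv n (p, e) i.succ))
      = ((if p = 0 then (1:ℤ) else -1) * (Perm.sign (Fin.revPerm : Perm (Fin (n+1))) : ℤ)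
        * (Perm.sign (Fin.revPerm : Perm (Fin (n+2))) : ℤ)) •
        ∑ e : Perm (Fin (n+1)), (Perm.sign e : ℤ) •
        (leftComm (x (Equiv.swap 0 p ((e 0).succ)))
            (List.ofFn fun j : Fin n => x (Equiv.swap 0 p ((e j.succ).succ))) * x p
          - x p * leftComm (x (Equiv.swap 0 p ((e 0).succ)))
            (List.ofFn fun j : Fin n => x (Equiv.swap 0 p ((e j.succ).succ)))) := by
        rw [Finset.smul_sum]; exact Finset.sum_congr rfl fun e _ => hterm e
    _ = _ := by
        congr 1
        rw [skewSum, Finset.sum_mul, Finset.mul_sum, ← Finset.sum_sub_distrib]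
        exact Finset.sum_congr rfl fun e _ => by
          rw [smul_sub, smul_mul_assoc, mul_smul_comm]

lemma skewSum_zero (w : Fin 1 → R) : skewSum 0 w = w 0 := by
  rw [skewSum]
  rw [Finset.sum_eq_single (1 : Perm (Fin 1))]
  · simp [leftComm]
  · intro b _ hb; exact absurd (Subsingleton.elim b 1) hb
  · intro h; exact absurd (Finset.mem_univ _) h

lemma skewSum_one (z : Fin 2 → R) : skewSum 1 z = 2 • (z 0 * z 1 - z 1 * z 0) := by
  have h1 : ((Perm.sign (Fin.revPerm : Perm (Fin 1)) : ℤˣ) : ℤ) = 1 := by decide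
  have h2 : ((Perm.sign (Fin.revPerm : Perm (Fin 2)) : ℤˣ) : ℤ) = -1 := by decide
  rw [skewSum_peel 0 z, Fin.sum_univ_two]
  simp only [skewSum_zero, h1, h2]
  norm_num [Equiv.swap_apply_def]
  noncomm_ring

lemma base (x : Fin 3 → R) : skewSum 2 x = 0 := by
  have h2 : ((Perm.sign (Fin.revPerm : Perm (Fin 2)) : ℤˣ) : ℤ) = -1 := by decide
  have h3 : ((Perm.sign (Fin.revPerm : Perm (Fin 3)) : ℤˣ) : ℤ) = -1 := by decide
  have e1 : ((Equiv.swap 0 1 : Perm (Fin 3)) (Fin.succ 0)) = 0 := by decide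
  have e2 : ((Equiv.swap 0 1 : Perm (Fin 3)) (Fin.succ 1)) = 2 := by decide
  have e3 : ((Equiv.swap 0 2 : Perm (Fin 3)) (Fin.succ 0)) = 1 := by decide
  have e4 : ((Equiv.swap 0 2 : Perm (Fin 3)) (Fin.succ 1)) = 0 := by decide
  have e5 : ((Equiv.swap 0 0 : Perm (Fin 3)) (Fin.succ 0)) = 1 := by decide
  have e6 : ((Equiv.swap 0 0 : Perm (Fin 3)) (Fin.succ 1)) = 2 := by decide
  rw [skewSum_peel 1 x, Fin.sum_univ_three]
  simp only [skewSum_one, e1, e2, e3, e4, e5, e6, h2, h3]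
  norm_num
  noncomm_ring
  abel

lemma skewSum_eq_zero : ∀ (k : ℕ) (x : Fin (k+3) → R), skewSum (k+2) x = 0
  | 0, x => base x
  | (k+1), x => by
    show skewSum ((k+2)+1) x = 0
    rw [skewSum_peel (k+2) x]
    have hz : ∀ p : Fin (k+4), skewSum (k+2)
        (fun q : Fin (k+3) => x (Equiv.swap 0 p q.succ)) = 0 :=
      fun p => skewSum_eq_zero k _
    simp [hz]

end Aux

/-- In any associative algebra, the full skew-symmetrization of the left-normed
commutator of length `m ≥ 3` vanishes:
`∑_{σ ∈ S_m} sgn(σ) [[…[[x_{σ(1)}, x_{σ(2)}], x_{σ(3)}], …], x_{σ(m)}] = 0`.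
(Here `m = k + 3`.) -/
theorem skew_leftComm_assoc_zero
    (R : Type*) [Ring R] (k : ℕ) (x : Fin (k + 3) → R) :
    ∑ σ : Equiv.Perm (Fin (k + 3)),
      (Equiv.Perm.sign σ : ℤ) •
        leftComm (x (σ 0)) (List.ofFn fun i : Fin (k + 2) => x (σ i.succ)) = 0 :=
  skewSum_eq_zero k x
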